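/- For every real z, z + φ(z)/Φ(z) > 0, where φ and Φ are the standard normal pdf and CDF. -/
import Mathlib


open MeasureTheory

noncomputable def stdPdf (x : ℝ) : ℝ :=
  (Real.sqrt (2 * Real.pi))⁻¹ * Real.exp (-x ^ 2 / 2)

noncomputable def stdCdf (x : ℝ) : ℝ := ∫ u in Set.Iic x, stdPdf u

lemma stdPdf_pos (x : ℝ) : 0 < stdPdf x := by
  have h2π : 0 < Real.sqrt (2 * Real.pi) := Real.sqrt_pos.mpr (by positivity)
  exact mul_pos (inv_pos.mpr h2π) (Real.exp_pos _)

lemma stdPdf_eq (x : ℝ) :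
    stdPdf x = (Real.sqrt (2 * Real.pi))⁻¹ * Real.exp (-(1/2) * x ^ 2) := by
  unfold stdPdf; ring_nf

lemma integrable_stdPdf : Integrable stdPdf := by
  have h := (integrable_exp_neg_mul_sq (b := (1:ℝ)/2) (by norm_num)).const_mul
    (Real.sqrt (2 * Real.pi))⁻¹
  refine h.congr (Filter.Eventually.of_forall fun x => ?_)
  rw [stdPdf_eq]

lemma integrable_mul_stdPdf : Integrable (fun x => -x * stdPdf x) := by
  have h := ((integrable_mul_exp_neg_mul_sq (b := (1:ℝ)/2) (by norm_num)).const_mul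
    (Real.sqrt (2 * Real.pi))⁻¹).neg
  refine h.congr (Filter.Eventually.of_forall fun x => ?_)
  simp only [Pi.neg_apply, stdPdf_eq]; ring

lemma hasDerivAt_stdPdf (x : ℝ) : HasDerivAt stdPdf (-x * stdPdf x) x := by
  have h1 : HasDerivAt (fun x : ℝ => -x ^ 2 / 2) (-x) x := by
    have := ((hasDerivAt_pow 2 x).neg).div_const 2
    exact this.congr_deriv (by ring)
  have h2 := (h1.exp).const_mul (Real.sqrt (2 * Real.pi))⁻¹
  refine h2.congr_deriv ?_
  unfold stdPdf; ring

lemma tendsto_stdPdf_atBot : Filter.Tendsto stdPdf Filter.atBot (nhds 0) := by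
  have hsq : Filter.Tendsto (fun x : ℝ => -x ^ 2 / 2) Filter.atBot Filter.atBot := by
    have h1 : Filter.Tendsto (fun x : ℝ => x ^ 2) Filter.atBot Filter.atTop := by
      have := (Filter.tendsto_pow_atTop (α := ℝ) (n := 2) two_ne_zero).comp
        Filter.tendsto_neg_atBot_atTop
      refine this.congr (fun x => ?_); simp [Function.comp]
    exact (Filter.tendsto_neg_atTop_atBot.comp h1).atBot_div_const (by norm_num)
  have h2 := (Real.tendsto_exp_atBot).comp hsq
  have h0 := h2.const_mul (Real.sqrt (2 * Real.pi))⁻¹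
  simp only [mul_zero] at h0
  exact h0.congr fun x => rfl

lemma key_integral (z : ℝ) : ∫ u in Set.Iic z, -u * stdPdf u = stdPdf z := by
  have := integral_Iic_of_hasDerivAt_of_tendsto' (f := stdPdf)
    (f' := fun u => -u * stdPdf u) (a := z) (m := 0)
    (fun x _ => hasDerivAt_stdPdf x) integrable_mul_stdPdf.integrableOn
    tendsto_stdPdf_atBot
  simpa using this

lemma stdCdf_pos (z : ℝ) : 0 < stdCdf z := by
  unfold stdCdf
  rw [setIntegral_pos_iff_support_of_nonneg_ae
    (Filter.Eventually.of_forall (fun x => (stdPdf_pos x).le))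
    integrable_stdPdf.integrableOn]
  have hs : Function.support stdPdf ∩ Set.Iic z = Set.Iic z := by
    apply Set.inter_eq_self_of_subset_right
    intro x _
    exact (stdPdf_pos x).ne'
  rw [hs]
  simp [Real.volume_Iic]

/-- For every real `z`, `z + φ(z)/Φ(z) > 0` (inverse Mills ratio bound). -/
theorem stmt4 (z : ℝ) : 0 < z + stdPdf z / stdCdf z := by
  rcases le_or_gt 0 z with hz | hz
  · exact add_pos_of_nonneg_of_pos hz (div_pos (stdPdf_pos z) (stdCdf_pos z))
  · have hkey : -z * stdCdf z < stdPdf z := by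
      have hdiff : 0 < ∫ u in Set.Iic z, (-u * stdPdf u - -z * stdPdf u) := by
        rw [setIntegral_pos_iff_support_of_nonneg_ae]
        · have hsub : Set.Iio z ⊆
              Function.support (fun u => -u * stdPdf u - -z * stdPdf u) ∩ Set.Iic z := by
            intro u hu
            have huz : u < z := hu
            refine ⟨?_, le_of_lt huz⟩
            have h : -u * stdPdf u - -z * stdPdf u = (z - u) * stdPdf u := by ring
            rw [Function.mem_support, h]
            exact (mul_pos (by linarith) (stdPdf_pos u)).ne'
          refine lt_of_lt_of_le ?_ (measure_mono hsub)
          simp [Real.volume_Iio]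
        · refine ae_restrict_of_forall_mem measurableSet_Iic (fun u hu => ?_)
          have huz : u ≤ z := hu
          show (0:ℝ) ≤ -u * stdPdf u - -z * stdPdf u
          have h : -u * stdPdf u - -z * stdPdf u = (z - u) * stdPdf u := by ring
          rw [h]
          exact mul_nonneg (by linarith) (stdPdf_pos u).le
        · exact (integrable_mul_stdPdf.sub (integrable_stdPdf.const_mul (-z))).integrableOn
      have heq : ∫ u in Set.Iic z, (-u * stdPdf u - -z * stdPdf u)
          = stdPdf z - -z * stdCdf z := by
        rw [integral_sub integrable_mul_stdPdf.integrableOn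
          (integrable_stdPdf.const_mul (-z)).integrableOn, key_integral,
          integral_const_mul]
        rfl
      linarith [heq ▸ hdiff]
    have h2 : -z < stdPdf z / stdCdf z := (lt_div_iff₀ (stdCdf_pos z)).mpr hkey
    linarith
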